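/- arXiv:math/0608239 — 2 statements merged into one kernel-verified Lean document; each statement's English description precedes it below -/
import Mathlib

section
/- Let (a_n, b_n)_{n≥1} be i.i.d. random variables with a_n ∈ GL(d,ℝ), b_n ∈ ℝ^d, satisfying E(log⁺‖a_1‖) < ∞, E(log⁺‖b_1‖) < ∞, and suppose the top Lyapunov exponent α = lim_n (1/n) E(log‖a_1⋯a_n‖) is strictly negative. Then the random series z = Σ_{k=0}^∞ a_1⋯a_k b_{k+1} converges almost surely. -/
open Filter MeasureTheory ProbabilityTheory Matrix
open scoped Matrix.Norms.L2Operator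

noncomputable instance matMS (d : ℕ) : MeasurableSpace (Matrix (Fin d) (Fin d) ℝ) :=
  inferInstanceAs (MeasurableSpace (Fin d → Fin d → ℝ))

/-- The product `a_1 ⋯ a_n` of the first `n` random matrices. -/
noncomputable def matProd {d : ℕ} {Ω : Type*} (A : ℕ → Ω → Matrix (Fin d) (Fin d) ℝ)
    (n : ℕ) (ω : Ω) : Matrix (Fin d) (Fin d) ℝ :=
  ((List.range n).map (fun i => A (i + 1) ω)).prod


instance matBorel (d : ℕ) : BorelSpace (Matrix (Fin d) (Fin d) ℝ) :=
  inferInstanceAs (BorelSpace (Fin d → Fin d → ℝ))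

instance matSC (d : ℕ) : SecondCountableTopology (Matrix (Fin d) (Fin d) ℝ) :=
  inferInstanceAs (SecondCountableTopology (Fin d → Fin d → ℝ))

lemma measurable_matNorm {d : ℕ} : Measurable (fun M : Matrix (Fin d) (Fin d) ℝ => ‖M‖) :=
  continuous_norm.measurable

lemma Measurable.matMul {α : Type*} [MeasurableSpace α] {d : ℕ}
    {f g : α → Matrix (Fin d) (Fin d) ℝ} (hf : Measurable f) (hg : Measurable g) :
    Measurable (fun a => f a * g a) :=
  (continuous_mul.measurable : Measurable (fun p : Matrix (Fin d) (Fin d) ℝ × _ => p.1 * p.2)).comp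
    (hf.prodMk hg)

lemma measurable_listProd {d m : ℕ} :
    Measurable (fun v : Fin m → Matrix (Fin d) (Fin d) ℝ => (List.ofFn v).prod) := by
  induction m with
  | zero => simp only [List.ofFn_zero, List.prod_nil]; exact measurable_const
  | succ m ih =>
    have : (fun v : Fin (m+1) → Matrix (Fin d) (Fin d) ℝ => (List.ofFn v).prod)
        = fun v => v 0 * (List.ofFn (fun i : Fin m => v i.succ)).prod := by
      funext v; rw [List.ofFn_succ]; simp
    rw [this]
    exact (measurable_pi_apply 0).matMul
      (ih.comp (measurable_pi_lambda _ fun i => measurable_pi_apply _))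

lemma map_tuple_eq_pi {Ω G : Type*} [MeasureSpace Ω]
    [IsProbabilityMeasure (volume : Measure Ω)] [MeasurableSpace G]
    {X : ℕ → Ω → G} (hXm : ∀ i, Measurable (X i))
    (hindep : iIndepFun X volume)
    {m : ℕ} (e : Fin m → ℕ) (he : Function.Injective e) :
    volume.map (fun ω (i : Fin m) => X (e i) ω)
      = Measure.pi (fun i => volume.map (X (e i))) := by
  refine (Measure.pi_eq fun s hs => ?_).symm
  rw [Measure.map_apply (measurable_pi_lambda _ fun i => hXm (e i))
    (MeasurableSet.univ_pi hs)]
  have hpre : (fun ω (i : Fin m) => X (e i) ω) ⁻¹' (Set.pi Set.univ s)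
      = ⋂ i, X (e i) ⁻¹' s i := by
    ext ω; simp [Set.mem_pi]
  rw [hpre]
  rcases isEmpty_or_nonempty (Fin m) with hm | hm
  · simp
  · set g : ℕ → Set Ω := fun k => X k ⁻¹' s (Function.invFun e k) with hg
    have h1 : (⋂ i, X (e i) ⁻¹' s i) = ⋂ k ∈ Finset.image e Finset.univ, g k := by
      ext ω
      simp only [Set.mem_iInter, Finset.mem_image, Finset.mem_univ, true_and, Set.mem_preimage]
      constructor
      · rintro h k ⟨i, rfl⟩
        simpa [hg, Function.leftInverse_invFun he i] using h i
      · intro h i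
        have := h (e i) ⟨i, rfl⟩
        simpa [hg, Function.leftInverse_invFun he i] using this
    rw [h1, hindep.meas_biInter (fun k _ => ⟨s (Function.invFun e k), hs _, rfl⟩),
      Finset.prod_image (fun i _ j _ h => he h)]
    refine Finset.prod_congr rfl fun i _ => ?_
    rw [Function.leftInverse_invFun he i, Measure.map_apply (hXm (e i)) (hs i)]

lemma tuple_identDistrib {Ω G : Type*} [MeasureSpace Ω]
    [IsProbabilityMeasure (volume : Measure Ω)] [MeasurableSpace G]
    {X : ℕ → Ω → G} (hXm : ∀ i, Measurable (X i))
    (hindep : iIndepFun X volume)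
    (hident : ∀ i, IdentDistrib (X i) (X 1) volume volume)
    {m : ℕ} (e₁ e₂ : Fin m → ℕ) (he₁ : Function.Injective e₁)
    (he₂ : Function.Injective e₂) :
    IdentDistrib (fun ω (i : Fin m) => X (e₁ i) ω) (fun ω (i : Fin m) => X (e₂ i) ω)
      volume volume := by
  refine ⟨(measurable_pi_lambda _ fun i => hXm _).aemeasurable,
    (measurable_pi_lambda _ fun i => hXm _).aemeasurable, ?_⟩
  rw [map_tuple_eq_pi hXm hindep e₁ he₁, map_tuple_eq_pi hXm hindep e₂ he₂]
  congr 1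
  funext i
  rw [(hident (e₁ i)).map_eq, (hident (e₂ i)).map_eq]
lemma pi_norm_le_euclidean {d : ℕ} (v : Fin d → ℝ) :
    ‖v‖ ≤ ‖(EuclideanSpace.equiv (Fin d) ℝ).symm v‖ := by
  rcases isEmpty_or_nonempty (Fin d) with h | h
  · have hv : v = 0 := funext fun i => (h.false i).elim
    simp [hv]
  refine pi_norm_le_iff_of_nonneg (norm_nonneg _) |>.2 fun i => ?_
  have h1 : ‖(EuclideanSpace.equiv (Fin d) ℝ).symm v‖
      = Real.sqrt (∑ j, ‖v j‖ ^ 2) := by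
    rw [EuclideanSpace.norm_eq]; rfl
  rw [h1]
  calc ‖v i‖ = Real.sqrt (‖v i‖ ^ 2) := by rw [Real.sqrt_sq (norm_nonneg _)]
  _ ≤ Real.sqrt (∑ j, ‖v j‖ ^ 2) := by
      apply Real.sqrt_le_sqrt
      exact Finset.single_le_sum (f := fun j => ‖v j‖ ^ 2) (fun j _ => sq_nonneg _) (Finset.mem_univ i)

lemma euclidean_norm_le {d : ℕ} (v : Fin d → ℝ) :
    ‖(EuclideanSpace.equiv (Fin d) ℝ).symm v‖ ≤ Real.sqrt d * ‖v‖ := by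
  have h1 : ‖(EuclideanSpace.equiv (Fin d) ℝ).symm v‖
      = Real.sqrt (∑ j, ‖v j‖ ^ 2) := by
    rw [EuclideanSpace.norm_eq]; rfl
  rw [h1]
  calc Real.sqrt (∑ j, ‖v j‖ ^ 2) ≤ Real.sqrt (∑ _j : Fin d, ‖v‖ ^ 2) := by
        apply Real.sqrt_le_sqrt
        exact Finset.sum_le_sum fun j _ =>
          pow_le_pow_left₀ (norm_nonneg _) (norm_le_pi_norm v j) 2
  _ = Real.sqrt d * ‖v‖ := by
      rw [Finset.sum_const, Finset.card_univ, Fintype.card_fin, nsmul_eq_mul,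
        Real.sqrt_mul (by positivity), Real.sqrt_sq (norm_nonneg _)]

lemma norm_mulVec_le {d : ℕ} (M : Matrix (Fin d) (Fin d) ℝ) (v : Fin d → ℝ) :
    ‖M.mulVec v‖ ≤ ‖M‖ * (Real.sqrt d * ‖v‖) := by
  calc ‖M.mulVec v‖ ≤ ‖(EuclideanSpace.equiv (Fin d) ℝ).symm (M.mulVec v)‖ :=
        pi_norm_le_euclidean _
  _ ≤ ‖M‖ * ‖(EuclideanSpace.equiv (Fin d) ℝ).symm v‖ := M.l2_opNorm_mulVec _
  _ ≤ ‖M‖ * (Real.sqrt d * ‖v‖) := by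
      exact mul_le_mul_of_nonneg_left (euclidean_norm_le v) (norm_nonneg M)

lemma log_norm_mul_le {d : ℕ} {M N : Matrix (Fin d) (Fin d) ℝ}
    (hM : 0 < ‖M‖) (hN : 0 < ‖N‖) (hMN : 0 < ‖M * N‖) :
    Real.log ‖M * N‖ ≤ Real.log ‖M‖ + Real.log ‖N‖ := by
  rw [← Real.log_mul hM.ne' hN.ne']
  exact (Real.log_le_log_iff hMN (by positivity)).2 (l2_opNorm_mul M N)

lemma listSplit {d : ℕ} (g : ℕ → Matrix (Fin d) (Fin d) ℝ) (a b : ℕ) :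
    ((List.range (a + b)).map g).prod
      = ((List.range a).map g).prod * ((List.range b).map (fun i => g (a + i))).prod := by
  rw [List.range_add, List.map_append, List.prod_append, List.map_map]
  rfl

lemma det_summable {d n₀ : ℕ} (hn₀ : 0 < n₀)
    (M : ℕ → Matrix (Fin d) (Fin d) ℝ) (b : ℕ → Fin d → ℝ)
    (la lb Y : ℕ → ℝ)
    (hlog : ∀ m, Real.log ‖M m‖ ≤ (∑ j ∈ Finset.range (m / n₀), Y j)
      + ((∑ i ∈ Finset.range m, la i) - ∑ i ∈ Finset.range (m / n₀ * n₀), la i))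
    (hb : ∀ m, ‖b m‖ ≤ Real.exp (lb m))
    (hM : ∀ m, 0 < ‖M m‖)
    (μa μb μY : ℝ)
    (ha : Tendsto (fun k : ℕ => (∑ i ∈ Finset.range k, la i) / k) atTop (nhds μa))
    (hbt : Tendsto (fun k : ℕ => (∑ i ∈ Finset.range k, lb i) / k) atTop (nhds μb))
    (hY : Tendsto (fun k : ℕ => (∑ j ∈ Finset.range k, Y j) / k) atTop (nhds μY))
    (hneg : μY / n₀ < 0) :
    Summable (fun m => (M m).mulVec (b m)) := by
  set Sa : ℕ → ℝ := fun k => ∑ i ∈ Finset.range k, la i with hSa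
  set Sb : ℕ → ℝ := fun k => ∑ i ∈ Finset.range k, lb i with hSb
  set SY : ℕ → ℝ := fun k => ∑ j ∈ Finset.range k, Y j with hSY
  set q : ℕ → ℕ := fun m => m / n₀ with hq
  -- q tends to infinity
  have hqtop : Tendsto q atTop atTop := by
    refine tendsto_atTop_atTop.2 fun k => ⟨k * n₀, fun m hm => ?_⟩
    exact (Nat.le_div_iff_mul_le hn₀).2 hm
  have hqntop : Tendsto (fun m => q m * n₀) atTop atTop := by
    refine tendsto_atTop_atTop.2 fun k => ⟨k * n₀, fun m hm => ?_⟩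
    have h1 : k ≤ q m := (Nat.le_div_iff_mul_le hn₀).2 hm
    calc k ≤ k * n₀ := Nat.le_mul_of_pos_right k hn₀
    _ ≤ q m * n₀ := Nat.mul_le_mul_right n₀ h1
  -- (q m * n₀ : ℝ)/m → 1
  have hratio : Tendsto (fun m : ℕ => ((q m * n₀ : ℕ) : ℝ) / m) atTop (nhds 1) := by
    have hlb : Tendsto (fun m : ℕ => ((m : ℝ) - n₀) / m) atTop (nhds 1) := by
      have : Tendsto (fun m : ℕ => 1 - (n₀ : ℝ) / m) atTop (nhds (1 - 0)) :=
        tendsto_const_nhds.sub (tendsto_const_div_atTop_nhds_zero_nat _)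
      simp only [sub_zero] at this
      refine this.congr' ?_
      filter_upwards [eventually_ge_atTop 1] with m hm
      have hm0 : (m : ℝ) ≠ 0 := Nat.cast_ne_zero.2 (by omega)
      field_simp
    refine tendsto_of_tendsto_of_tendsto_of_le_of_le' hlb tendsto_const_nhds ?_ ?_
    · filter_upwards [eventually_ge_atTop 1] with m hm
      have h1 : m < q m * n₀ + n₀ := by
        have h2 : q m * n₀ + m % n₀ = m := by
          rw [Nat.mul_comm]; exact Nat.div_add_mod m n₀
        have h3 := Nat.mod_lt m hn₀
        omega
      have hm0 : (0 : ℝ) < m := by exact_mod_cast Nat.pos_of_ne_zero (by omega)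
      have h4 : (m : ℝ) - n₀ ≤ ((q m * n₀ : ℕ) : ℝ) := by
        have : (m : ℝ) < ((q m * n₀ : ℕ) : ℝ) + n₀ := by exact_mod_cast h1
        linarith
      exact div_le_div_of_nonneg_right h4 hm0.le
    · filter_upwards [eventually_ge_atTop 1] with m hm
      have h2 : q m * n₀ ≤ m := Nat.div_mul_le_self m n₀
      have hm0 : (0 : ℝ) < m := by exact_mod_cast Nat.pos_of_ne_zero (by omega)
      rw [div_le_one hm0]
      exact_mod_cast h2
  -- SY (q m) / m → μY / n₀
  have hterm1 : Tendsto (fun m : ℕ => SY (q m) / m) atTop (nhds (μY / n₀)) := by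
    have h1 := ((hY.comp hqtop).mul hratio).div_const (n₀ : ℝ)
    rw [mul_one] at h1
    refine h1.congr' ?_
    filter_upwards [hqtop.eventually_ge_atTop 1, eventually_ge_atTop 1] with m hm hm'
    have hq0 : (q m : ℝ) ≠ 0 := Nat.cast_ne_zero.2 (by omega)
    have hn0 : (n₀ : ℝ) ≠ 0 := Nat.cast_ne_zero.2 (by omega)
    have hm0 : (m : ℝ) ≠ 0 := Nat.cast_ne_zero.2 (by omega)
    simp only [Function.comp_apply, hSY]
    push_cast
    field_simp
  -- Sa (q m * n₀) / m → μa
  have hterm2 : Tendsto (fun m : ℕ => Sa (q m * n₀) / m) atTop (nhds μa) := by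
    have h1 := (ha.comp hqntop).mul hratio
    rw [mul_one] at h1
    refine h1.congr' ?_
    filter_upwards [hqntop.eventually_ge_atTop 1, eventually_ge_atTop 1] with m hm hm'
    have hq0 : ((q m * n₀ : ℕ) : ℝ) ≠ 0 := Nat.cast_ne_zero.2 (by omega)
    have hm0 : (m : ℝ) ≠ 0 := Nat.cast_ne_zero.2 (by omega)
    simp only [Function.comp_apply, hSa]
    rw [div_mul_div_comm, mul_comm (∑ i ∈ Finset.range (q m * n₀), la i) _,
      mul_div_mul_left _ _ hq0]
  -- lb m / m → 0
  have hterm4 : Tendsto (fun m : ℕ => lb m / m) atTop (nhds 0) := by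
    have hs : Tendsto (fun m : ℕ => Sb (m + 1) / m - Sb m / m) atTop (nhds (μb - μb)) := by
      refine Tendsto.sub ?_ hbt
      have h1 : Tendsto (fun m : ℕ => (Sb (m + 1) / (m + 1)) * (((m : ℝ) + 1) / m))
          atTop (nhds (μb * 1)) := by
        refine Tendsto.mul ?_ ?_
        · refine (hbt.comp (tendsto_add_atTop_nat 1)).congr (fun m => ?_)
          simp only [Function.comp_apply, Nat.add_comm 1 m, hSb]
          push_cast
          ring
        · have : Tendsto (fun m : ℕ => 1 + (1 : ℝ) / m) atTop (nhds (1 + 0)) :=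
            tendsto_const_nhds.add (tendsto_const_div_atTop_nhds_zero_nat _)
          rw [add_zero] at this
          refine this.congr' ?_
          filter_upwards [eventually_ge_atTop 1] with m hm
          have hm0 : (m : ℝ) ≠ 0 := Nat.cast_ne_zero.2 (by omega)
          field_simp
      rw [mul_one] at h1
      refine h1.congr' ?_
      filter_upwards [eventually_ge_atTop 1] with m hm
      have hm0 : (m : ℝ) ≠ 0 := Nat.cast_ne_zero.2 (by omega)
      have hm1 : (m : ℝ) + 1 ≠ 0 := by positivity
      rw [div_mul_div_comm, mul_comm (Sb (m + 1)) _, mul_div_mul_left _ _ hm1]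
    rw [sub_self] at hs
    refine hs.congr' ?_
    filter_upwards [eventually_ge_atTop 1] with m hm
    have : Sb (m + 1) = Sb m + lb m := by
      simp [hSb, Finset.sum_range_succ]
    rw [this]
    ring
  -- the global upper bound h
  set h : ℕ → ℝ := fun m => SY (q m) + (Sa m - Sa (q m * n₀)) + lb m with hh
  have hlim : Tendsto (fun m : ℕ => h m / m) atTop (nhds (μY / n₀)) := by
    have h2 := (hterm1.add (ha.sub hterm2)).add hterm4
    have h3 : Tendsto (fun m : ℕ => SY (q m) / m + (Sa m / m - Sa (q m * n₀) / m) + lb m / m)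
        atTop (nhds (μY / n₀)) := by
      have : μY / n₀ + (μa - μa) + 0 = μY / n₀ := by ring
      rw [← this]
      exact h2
    refine h3.congr (fun m => ?_)
    simp only [hh, hSa, hSY]
    ring
  -- eventual geometric bound
  set c : ℝ := μY / n₀ / 2 with hc
  have hc0 : c < 0 := by rw [hc]; linarith
  have hcc : μY / n₀ < c := by rw [hc]; linarith
  have hev : ∀ᶠ m in atTop, h m < c * m := by
    filter_upwards [hlim.eventually_lt_const hcc, eventually_ge_atTop 1] with m h1 h2
    have hm0 : (0 : ℝ) < m := by exact_mod_cast Nat.pos_of_ne_zero (by omega)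
    calc h m = (h m / m) * m := by field_simp
    _ < c * m := by exact mul_lt_mul_of_pos_right h1 hm0
  refine Summable.of_norm_bounded_eventually
    (g := fun m => Real.sqrt d * Real.exp c ^ m) ?_ ?_
  · exact (summable_geometric_of_lt_one (Real.exp_pos c).le
      (Real.exp_lt_one_iff.2 hc0)).mul_left _
  · rw [Nat.cofinite_eq_atTop]
    filter_upwards [hev] with m hm
    calc ‖(M m).mulVec (b m)‖ ≤ ‖M m‖ * (Real.sqrt d * ‖b m‖) := norm_mulVec_le _ _
    _ = Real.sqrt d * (‖M m‖ * ‖b m‖) := by ring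
    _ ≤ Real.sqrt d * (Real.exp (Real.log ‖M m‖) * Real.exp (lb m)) := by
        have := Real.exp_log (hM m)
        rw [this]
        refine mul_le_mul_of_nonneg_left ?_ (Real.sqrt_nonneg _)
        exact mul_le_mul_of_nonneg_left (hb m) (norm_nonneg _)
    _ = Real.sqrt d * Real.exp (Real.log ‖M m‖ + lb m) := by rw [Real.exp_add]
    _ ≤ Real.sqrt d * Real.exp (h m) := by
        refine mul_le_mul_of_nonneg_left (Real.exp_le_exp.2 ?_) (Real.sqrt_nonneg _)
        have := hlog m
        rw [hh]
        simp only [hq]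
        linarith [hlog m]
    _ ≤ Real.sqrt d * Real.exp (c * m) := by
        exact mul_le_mul_of_nonneg_left (Real.exp_le_exp.2 hm.le) (Real.sqrt_nonneg _)
    _ = Real.sqrt d * Real.exp c ^ m := by
        rw [← Real.exp_nat_mul]
        ring_nf

lemma ofFn_range_map {β : Type*} (g : ℕ → β) (r : ℕ) :
    List.ofFn (fun t : Fin r => g t) = (List.range r).map g := by
  apply List.ext_getElem <;> simp

lemma mat_norm_one_le {d : ℕ} : ‖(1 : Matrix (Fin d) (Fin d) ℝ)‖ ≤ 1 := by
  rw [Matrix.cstar_norm_def, _root_.map_one]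
  exact ContinuousLinearMap.norm_id_le

lemma unit_norm_pos {d : ℕ} (hd : 0 < d) {M : Matrix (Fin d) (Fin d) ℝ}
    (hM : IsUnit M) : 0 < ‖M‖ := by
  haveI : Nonempty (Fin d) := Fin.pos_iff_nonempty.1 hd
  haveI : Nontrivial (Matrix (Fin d) (Fin d) ℝ) :=
    inferInstanceAs (Nontrivial (Fin d → Fin d → ℝ))
  exact norm_pos_iff.2 hM.ne_zero

lemma isUnit_rangeProd {d : ℕ} (g : ℕ → Matrix (Fin d) (Fin d) ℝ)
    (hg : ∀ i, IsUnit (g i)) (r : ℕ) : IsUnit ((List.range r).map g).prod := by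
  refine List.prod_isUnit fun m hm => ?_
  obtain ⟨i, _, rfl⟩ := List.mem_map.1 hm
  exact hg i

lemma log_norm_range_prod_le {d : ℕ} (hd : 0 < d) (g : ℕ → Matrix (Fin d) (Fin d) ℝ)
    (hg : ∀ i, IsUnit (g i)) (r : ℕ) :
    Real.log ‖((List.range r).map g).prod‖ ≤ ∑ i ∈ Finset.range r, max (Real.log ‖g i‖) 0 := by
  induction r with
  | zero => simpa using Real.log_nonpos (norm_nonneg _) mat_norm_one_le
  | succ r ih =>
    rw [List.range_succ, List.map_append, List.prod_append, List.map_singleton,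
      List.prod_singleton, Finset.sum_range_succ]
    have h1 := log_norm_mul_le (M := ((List.range r).map g).prod) (N := g r)
      (unit_norm_pos hd (isUnit_rangeProd g hg r)) (unit_norm_pos hd (hg r))
      (unit_norm_pos hd ((isUnit_rangeProd g hg r).mul (hg r)))
    have h2 : Real.log ‖g r‖ ≤ max (Real.log ‖g r‖) 0 := le_max_left _ _
    linarith

lemma log_norm_blocks_le {d : ℕ} (hd : 0 < d) (g : ℕ → Matrix (Fin d) (Fin d) ℝ)
    (hg : ∀ i, IsUnit (g i)) (n₀ : ℕ) (k : ℕ) :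
    Real.log ‖((List.range (k * n₀)).map g).prod‖
      ≤ ∑ j ∈ Finset.range k,
          Real.log ‖((List.range n₀).map (fun i => g (j * n₀ + i))).prod‖ := by
  induction k with
  | zero => simpa using Real.log_nonpos (norm_nonneg _) mat_norm_one_le
  | succ k ih =>
    have hsplit : (k + 1) * n₀ = k * n₀ + n₀ := by ring
    rw [hsplit, listSplit g (k * n₀) n₀, Finset.sum_range_succ]
    have h1 := log_norm_mul_le (M := ((List.range (k * n₀)).map g).prod)
      (N := ((List.range n₀).map (fun i => g (k * n₀ + i))).prod)
      (unit_norm_pos hd (isUnit_rangeProd g hg _))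
      (unit_norm_pos hd (isUnit_rangeProd _ (fun i => hg _) _))
      (by
        rw [← listSplit g (k * n₀) n₀, ← hsplit]
        exact unit_norm_pos hd (isUnit_rangeProd g hg _))
    linarith

lemma norm_le_exp_log_max {x : ℝ} (hx : 0 ≤ x) : x ≤ Real.exp (max (Real.log x) 0) := by
  rcases eq_or_lt_of_le hx with h | h
  · exact le_trans (le_of_eq h.symm) (Real.exp_pos _).le
  · calc x = Real.exp (Real.log x) := (Real.exp_log h).symm
    _ ≤ Real.exp (max (Real.log x) 0) := Real.exp_le_exp.2 (le_max_left _ _)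

/-- Let `(a_n, b_n)` be i.i.d. with `a_n ∈ GL(d,ℝ)`, `b_n ∈ ℝ^d`, with
`E(log⁺‖a_1‖) < ∞`, `E(log⁺‖b_1‖) < ∞` and negative top Lyapunov exponent
`α = lim_n (1/n) E(log‖a_1⋯a_n‖) < 0`. Then the random series
`z = ∑_{k=0}^∞ a_1⋯a_k b_{k+1}` converges almost surely. -/
theorem stmt2 {d : ℕ} {Ω : Type*} [MeasureSpace Ω]
    [IsProbabilityMeasure (volume : Measure Ω)]
    (A : ℕ → Ω → Matrix (Fin d) (Fin d) ℝ) (B : ℕ → Ω → (Fin d → ℝ))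
    (hinv : ∀ n, ∀ ω, IsUnit (A n ω))
    (hmeas : ∀ n, Measurable (fun ω => (A n ω, B n ω)))
    (hindep : iIndepFun (fun n ω => (A n ω, B n ω)) volume)
    (hident : ∀ n, IdentDistrib (fun ω => (A n ω, B n ω)) (fun ω => (A 1 ω, B 1 ω))
      volume volume)
    (hA : Integrable (fun ω => max (Real.log ‖A 1 ω‖) 0) volume)
    (hB : Integrable (fun ω => max (Real.log ‖B 1 ω‖) 0) volume)
    (α : ℝ)
    (hα : Tendsto (fun n : ℕ =>
      (1 / (n : ℝ)) * ∫ ω, Real.log ‖matProd A n ω‖) atTop (nhds α))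
    (hαneg : α < 0) :
    ∀ᵐ ω : Ω, ∃ L : Fin d → ℝ,
      Tendsto (fun N : ℕ => ∑ k ∈ Finset.range N, (matProd A k ω).mulVec (B (k + 1) ω))
        atTop (nhds L) := by
  rcases Nat.eq_zero_or_pos d with hd | hd
  · subst hd
    refine Eventually.of_forall (fun ω => ⟨0, ?_⟩)
    have h0 : (fun N : ℕ => ∑ k ∈ Finset.range N, (matProd A k ω).mulVec (B (k + 1) ω))
        = fun _ => 0 := funext fun N => Subsingleton.elim _ _
    rw [h0]
    exact tendsto_const_nhds
  -- positive dimension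
  haveI : Nonempty (Fin d) := Fin.pos_iff_nonempty.1 hd
  -- choose a block length n₀
  have hhalf : α < α / 2 := by linarith
  obtain ⟨n₀, hlt, hge⟩ :=
    ((hα.eventually_lt_const hhalf).and (eventually_ge_atTop 1)).exists
  have hn₀ : 0 < n₀ := hge
  have hn₀R : (0 : ℝ) < n₀ := by exact_mod_cast hn₀
  have hfI : ∫ ω, Real.log ‖matProd A n₀ ω‖ < n₀ * (α / 2) := by
    have h1 := mul_lt_mul_of_pos_left hlt hn₀R
    have h2 : (n₀ : ℝ) * (1 / n₀ * ∫ ω, Real.log ‖matProd A n₀ ω‖)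
        = ∫ ω, Real.log ‖matProd A n₀ ω‖ := by
      field_simp
    rwa [h2] at h1
  have hfneg : ∫ ω, Real.log ‖matProd A n₀ ω‖ < 0 := lt_trans hfI (by nlinarith)
  have hint : Integrable (fun ω => Real.log ‖matProd A n₀ ω‖) := by
    by_contra hc
    rw [integral_undef hc] at hfneg
    exact lt_irrefl _ hfneg
  -- the iid sequence
  set X : ℕ → Ω → Matrix (Fin d) (Fin d) ℝ × (Fin d → ℝ) := fun n ω => (A n ω, B n ω) with hX
  -- log⁺ norms
  set La : ℕ → Ω → ℝ := fun i ω => max (Real.log ‖A (i + 1) ω‖) 0 with hLa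
  set Lb : ℕ → Ω → ℝ := fun i ω => max (Real.log ‖B (i + 1) ω‖) 0 with hLb
  have hgA : Measurable (fun p : Matrix (Fin d) (Fin d) ℝ × (Fin d → ℝ) =>
      max (Real.log ‖p.1‖) 0) :=
    (Real.measurable_log.comp (measurable_matNorm.comp measurable_fst)).max measurable_const
  have hgB : Measurable (fun p : Matrix (Fin d) (Fin d) ℝ × (Fin d → ℝ) =>
      max (Real.log ‖p.2‖) 0) :=
    (Real.measurable_log.comp (continuous_norm.measurable.comp measurable_snd)).max
      measurable_const
  have hSLLNa : ∀ᵐ ω, Tendsto (fun k : ℕ => (∑ i ∈ Finset.range k, La i ω) / k) atTop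
      (nhds (∫ ω, La 0 ω)) := by
    refine strong_law_ae_real La hA ?_ ?_
    · intro i j hij
      exact (hindep.indepFun (show i + 1 ≠ j + 1 by omega)).comp hgA hgA
    · intro i
      exact (hident (i + 1)).comp hgA
  have hSLLNb : ∀ᵐ ω, Tendsto (fun k : ℕ => (∑ i ∈ Finset.range k, Lb i ω) / k) atTop
      (nhds (∫ ω, Lb 0 ω)) := by
    refine strong_law_ae_real Lb hB ?_ ?_
    · intro i j hij
      exact (hindep.indepFun (show i + 1 ≠ j + 1 by omega)).comp hgB hgB
    · intro i
      exact (hident (i + 1)).comp hgB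
  -- block variables
  set F : (Fin n₀ → Matrix (Fin d) (Fin d) ℝ × (Fin d → ℝ)) → ℝ :=
    fun v => Real.log ‖(List.ofFn (fun t => (v t).1)).prod‖ with hFdef
  have hF : Measurable F :=
    Real.measurable_log.comp (measurable_matNorm.comp (measurable_listProd.comp
      (measurable_pi_lambda _ fun t => measurable_fst.comp (measurable_pi_apply t))))
  set e : ℕ → Fin n₀ → ℕ := fun j t => j * n₀ + t + 1 with he
  have hekey : ∀ i (t : Fin n₀), (i * n₀ + (t : ℕ)) / n₀ = i := by
    intro i t
    rw [Nat.add_comm, Nat.mul_comm i n₀, Nat.add_mul_div_left _ _ hn₀, Nat.div_eq_of_lt t.2,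
      Nat.zero_add]
  have heinj : ∀ j, Function.Injective (e j) := by
    intro j t t' h
    simp only [he] at h
    have : (t : ℕ) = (t' : ℕ) := by
      have h2 : j * n₀ + (t : ℕ) = j * n₀ + (t' : ℕ) := by omega
      omega
    exact Fin.val_injective this
  have hene : ∀ i j, i ≠ j → ∀ t t' : Fin n₀, e i t ≠ e j t' := by
    intro i j hij t t' h
    apply hij
    simp only [he] at h
    have h2 : i * n₀ + (t : ℕ) = j * n₀ + (t' : ℕ) := by omega
    calc i = (i * n₀ + (t : ℕ)) / n₀ := (hekey i t).symm
    _ = (j * n₀ + (t' : ℕ)) / n₀ := by rw [h2]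
    _ = j := hekey j t'
  set Y : ℕ → Ω → ℝ := fun j ω => F (fun t => X (e j t) ω) with hY
  -- Y's are pairwise independent
  have hYindep : Pairwise (Function.onFun (IndepFun · · (volume : Measure Ω)) Y) := by
    intro i j hij
    set S := Finset.image (e i) Finset.univ with hS
    set T := Finset.image (e j) Finset.univ with hT
    have hST : Disjoint S T := by
      rw [Finset.disjoint_left]
      rintro a ha hb
      obtain ⟨t, _, rfl⟩ := Finset.mem_image.1 ha
      obtain ⟨t', _, heq⟩ := Finset.mem_image.1 hb
      exact hene j i (Ne.symm hij) t' t heq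
    have hind := hindep.indepFun_finset S T hST hmeas
    have hmemS : ∀ t : Fin n₀, e i t ∈ S := fun t => Finset.mem_image.2 ⟨t, Finset.mem_univ t, rfl⟩
    have hmemT : ∀ t : Fin n₀, e j t ∈ T := fun t => Finset.mem_image.2 ⟨t, Finset.mem_univ t, rfl⟩
    have hφi : Measurable (fun v : ↥S → Matrix (Fin d) (Fin d) ℝ × (Fin d → ℝ) =>
        F (fun t => v ⟨e i t, hmemS t⟩)) :=
      hF.comp (measurable_pi_lambda _ fun t => measurable_pi_apply _)
    have hφj : Measurable (fun v : ↥T → Matrix (Fin d) (Fin d) ℝ × (Fin d → ℝ) =>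
        F (fun t => v ⟨e j t, hmemT t⟩)) :=
      hF.comp (measurable_pi_lambda _ fun t => measurable_pi_apply _)
    exact hind.comp hφi hφj
  -- Y's are identically distributed
  have hYident : ∀ j, IdentDistrib (Y j) (Y 0) volume volume := by
    intro j
    exact (tuple_identDistrib hmeas hindep hident (e j) (e 0) (heinj j) (heinj 0)).comp hF
  -- Y 0 = f
  have hY0 : Y 0 = fun ω => Real.log ‖matProd A n₀ ω‖ := by
    funext ω
    show Real.log ‖(List.ofFn (fun t : Fin n₀ => A (0 * n₀ + (t : ℕ) + 1) ω)).prod‖ = _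
    have h2 : List.ofFn (fun t : Fin n₀ => A (0 * n₀ + (t : ℕ) + 1) ω)
        = (List.range n₀).map (fun i => A (i + 1) ω) := by
      rw [← ofFn_range_map (fun i => A (i + 1) ω) n₀]
      congr 1
      funext t
      simp
    rw [h2]
    rfl
  have hYint : Integrable (Y 0) := hY0 ▸ hint
  have hSLLNY : ∀ᵐ ω, Tendsto (fun k : ℕ => (∑ j ∈ Finset.range k, Y j ω) / k) atTop
      (nhds (∫ ω, Y 0 ω)) := strong_law_ae_real Y hYint hYindep hYident
  have hμYneg : (∫ ω, Y 0 ω) / n₀ < 0 := by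
    apply div_neg_of_neg_of_pos _ hn₀R
    rw [hY0]
    exact hfneg
  -- pointwise log bound
  have hMunit : ∀ ω m, IsUnit (matProd A m ω) := by
    intro ω m
    exact isUnit_rangeProd (fun i => A (i + 1) ω) (fun i => hinv (i + 1) ω) m
  have hMpos : ∀ ω m, 0 < ‖matProd A m ω‖ := fun ω m => unit_norm_pos hd (hMunit ω m)
  have hlogb : ∀ ω m, Real.log ‖matProd A m ω‖ ≤ (∑ j ∈ Finset.range (m / n₀), Y j ω)
      + ((∑ i ∈ Finset.range m, La i ω) - ∑ i ∈ Finset.range (m / n₀ * n₀), La i ω) := by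
    intro ω m
    set g : ℕ → Matrix (Fin d) (Fin d) ℝ := fun i => A (i + 1) ω with hg
    have hgu : ∀ i, IsUnit (g i) := fun i => hinv (i + 1) ω
    set qm := m / n₀ with hqm
    have hmod : qm * n₀ + m % n₀ = m := by
      rw [Nat.mul_comm]
      exact Nat.div_add_mod m n₀
    set r := m % n₀ with hr
    have hsplit : matProd A m ω = ((List.range (qm * n₀)).map g).prod
        * ((List.range r).map (fun i => g (qm * n₀ + i))).prod := by
      rw [show matProd A m ω = ((List.range (qm * n₀ + r)).map g).prod from by rw [hmod]; rfl,
        listSplit]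
    have h1 : Real.log ‖matProd A m ω‖
        ≤ Real.log ‖((List.range (qm * n₀)).map g).prod‖
          + Real.log ‖((List.range r).map (fun i => g (qm * n₀ + i))).prod‖ := by
      rw [hsplit]
      exact log_norm_mul_le
        (unit_norm_pos hd (isUnit_rangeProd g hgu _))
        (unit_norm_pos hd (isUnit_rangeProd _ (fun i => hgu _) _))
        (by rw [← hsplit]; exact hMpos ω m)
    have h2 : Real.log ‖((List.range (qm * n₀)).map g).prod‖ ≤ ∑ j ∈ Finset.range qm, Y j ω := by
      refine (log_norm_blocks_le hd g hgu n₀ qm).trans (le_of_eq ?_)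
      refine Finset.sum_congr rfl fun j _ => ?_
      show Real.log ‖((List.range n₀).map (fun i => g (j * n₀ + i))).prod‖
        = Real.log ‖(List.ofFn (fun t : Fin n₀ => A (e j t) ω)).prod‖
      have h3 : List.ofFn (fun t : Fin n₀ => A (e j t) ω)
          = (List.range n₀).map (fun i => g (j * n₀ + i)) := by
        rw [← ofFn_range_map (fun i => g (j * n₀ + i)) n₀]
      rw [h3]
    have h4 : Real.log ‖((List.range r).map (fun i => g (qm * n₀ + i))).prod‖
        ≤ ∑ i ∈ Finset.range r, La (qm * n₀ + i) ω := by
      refine (log_norm_range_prod_le hd _ (fun i => hgu _) r).trans (le_of_eq ?_)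
      refine Finset.sum_congr rfl fun i _ => ?_
      simp [hLa, hg, Nat.add_assoc]
    have h5 : (∑ i ∈ Finset.range m, La i ω)
        = (∑ i ∈ Finset.range (qm * n₀), La i ω) + ∑ i ∈ Finset.range r, La (qm * n₀ + i) ω := by
      rw [← hmod]
      exact Finset.sum_range_add _ _ _
    linarith
  have hbexp : ∀ ω m, ‖B (m + 1) ω‖ ≤ Real.exp (Lb m ω) :=
    fun ω m => norm_le_exp_log_max (norm_nonneg _)
  -- combine
  filter_upwards [hSLLNa, hSLLNb, hSLLNY] with ω h1 h2 h3
  have hsum : Summable (fun m => (matProd A m ω).mulVec (B (m + 1) ω)) :=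
    det_summable hn₀ (fun m => matProd A m ω) (fun m => B (m + 1) ω)
      (fun i => La i ω) (fun i => Lb i ω) (fun j => Y j ω)
      (hlogb ω) (hbexp ω) (hMpos ω) _ _ _ h1 h2 h3 hμYneg
  exact ⟨∑' m, (matProd A m ω).mulVec (B (m + 1) ω), hsum.hasSum.tendsto_sum_nat⟩
end

section
/- Let ν be a probability measure on ℝ^d such that t^χ (δ_{t^{-1}} * ν) converges weakly (on continuous compactly supported functions on ℝ^d \ {0}) as t → +∞ to λ = ν_∞ ⊗ ℓ^χ, where ν_∞ is a finite measure on S^{d−1} and ℓ^χ(dt) = dt/t^{χ+1} on (0,∞). Then for any unit vector u with ν_∞({x ∈ S^{d−1}: ⟨u,x⟩ > 0}) > 0 and ν_∞({x : ⟨u,x⟩ = 0}) = 0, one has lim_{t→∞} t^χ ν({v : ⟨u,v⟩ ≥ t}) = (1/χ) ∫_{S^{d−1}} ⟨u,x⟩_+^χ dν_∞(x) > 0. -/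
set_option maxHeartbeats 1000000


open Filter MeasureTheory
open scoped ENNReal RealInnerProductSpace

noncomputable def ramp (a b s : ℝ) : ℝ := min 1 (max 0 ((s - a) / (b - a)))

lemma ramp_nonneg (a b s : ℝ) : 0 ≤ ramp a b s := le_min one_pos.le (le_max_left _ _)

lemma ramp_le_one (a b s : ℝ) : ramp a b s ≤ 1 := min_le_left _ _

lemma ramp_continuous (a b : ℝ) : Continuous fun s => ramp a b s := by
  unfold ramp
  fun_prop

lemma ramp_of_le {a b s : ℝ} (hab : a ≤ b) (h : s ≤ a) : ramp a b s = 0 := by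
  unfold ramp
  rcases eq_or_lt_of_le hab with hb' | hb'
  · simp [← hb', sub_eq_zero]
  · have : (s - a) / (b - a) ≤ 0 := div_nonpos_of_nonpos_of_nonneg (by linarith) (by linarith)
    simp [max_eq_left this]

lemma ramp_of_ge {a b s : ℝ} (hab : a < b) (h : b ≤ s) : ramp a b s = 1 := by
  unfold ramp
  have h1 : (1:ℝ) ≤ (s - a) / (b - a) := (one_le_div (by linarith)).2 (by linarith)
  rw [max_eq_right (by linarith), min_eq_left h1]

lemma lt_of_ramp_ne_zero {a b s : ℝ} (hab : a ≤ b) (h : ramp a b s ≠ 0) : a < s := by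
  by_contra hc
  exact h (ramp_of_le hab (not_lt.1 hc))

lemma ramp_one_sub_ne_zero {a b s : ℝ} (hab : a < b) (h : 1 - ramp a b s ≠ 0) : s < b := by
  by_contra hc
  rw [ramp_of_ge hab (not_lt.1 hc)] at h
  simp at h

noncomputable def bfun {d : ℕ} (u : EuclideanSpace ℝ (Fin d)) (a b m : ℝ)
    (v : EuclideanSpace ℝ (Fin d)) : ℝ :=
  ramp a b ⟪u, v⟫ * (1 - ramp m (2*m) ‖v‖)

variable {d : ℕ} {u : EuclideanSpace ℝ (Fin d)} {a b m : ℝ}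

lemma bfun_nonneg (v : EuclideanSpace ℝ (Fin d)) : 0 ≤ bfun u a b m v :=
  mul_nonneg (ramp_nonneg _ _ _) (by linarith [ramp_le_one m (2*m) ‖v‖])

lemma bfun_le_one (v : EuclideanSpace ℝ (Fin d)) : bfun u a b m v ≤ 1 :=
  mul_le_one₀ (ramp_le_one _ _ _) (by linarith [ramp_le_one m (2*m) ‖v‖])
    (by linarith [ramp_nonneg m (2*m) ‖v‖])

lemma bfun_continuous : Continuous (bfun u a b m) := by
  unfold bfun
  exact ((ramp_continuous a b).comp (continuous_const.inner continuous_id)).mul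
    (continuous_const.sub ((ramp_continuous m (2*m)).comp continuous_norm))

lemma bfun_support (hab : a ≤ b) (hm : 0 < m) {v : EuclideanSpace ℝ (Fin d)}
    (hv : bfun u a b m v ≠ 0) : a < ⟪u, v⟫ ∧ ‖v‖ < 2*m := by
  rcases mul_ne_zero_iff.1 hv with ⟨h1, h2⟩
  exact ⟨lt_of_ramp_ne_zero hab h1, ramp_one_sub_ne_zero (by linarith) h2⟩

lemma bfun_tsupport (hab : a ≤ b) (hm : 0 < m) :
    tsupport (bfun u a b m) ⊆ {v | a ≤ ⟪u, v⟫} ∩ Metric.closedBall 0 (2*m) := by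
  apply closure_minimal
  · intro v hv
    obtain ⟨h1, h2⟩ := bfun_support hab hm hv
    exact ⟨h1.le, by simpa [Metric.mem_closedBall, dist_zero_right] using h2.le⟩
  · exact (isClosed_le continuous_const (continuous_const.inner continuous_id)).inter
      Metric.isClosed_closedBall

lemma bfun_hcs (hab : a ≤ b) (hm : 0 < m) : HasCompactSupport (bfun u a b m) :=
  IsCompact.of_isClosed_subset (isCompact_closedBall 0 (2*m)) (isClosed_tsupport _)
    ((bfun_tsupport hab hm).trans Set.inter_subset_right)

lemma bfun_zero_notin (h0a : 0 < a) (hab : a ≤ b) (hm : 0 < m) :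
    (0 : EuclideanSpace ℝ (Fin d)) ∉ tsupport (bfun u a b m) := by
  intro h
  have := ((bfun_tsupport hab hm) h).1
  simp only [Set.mem_setOf_eq, inner_zero_right] at this
  linarith

noncomputable def annf {d : ℕ} (v : EuclideanSpace ℝ (Fin d)) : ℝ :=
  ramp (1/2) 1 ‖v‖ * (1 - ramp 2 (2*2) ‖v‖)

lemma annf_nonneg (v : EuclideanSpace ℝ (Fin d)) : 0 ≤ annf v :=
  mul_nonneg (ramp_nonneg _ _ _) (by linarith [ramp_le_one 2 (2*2) ‖v‖])

lemma annf_continuous : Continuous (annf (d := d)) := by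
  unfold annf
  exact ((ramp_continuous _ _).comp continuous_norm).mul
    (continuous_const.sub ((ramp_continuous _ _).comp continuous_norm))

lemma annf_tsupport :
    tsupport (annf (d := d)) ⊆ {v | (1:ℝ)/2 ≤ ‖v‖} ∩ Metric.closedBall 0 4 := by
  apply closure_minimal
  · intro v hv
    rcases mul_ne_zero_iff.1 hv with ⟨h1, h2⟩
    refine ⟨(lt_of_ramp_ne_zero (by norm_num) h1).le, ?_⟩
    have := ramp_one_sub_ne_zero (by norm_num : (2:ℝ) < 2*2) h2
    simpa [Metric.mem_closedBall, dist_zero_right] using (by linarith : ‖v‖ ≤ 4)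
  · exact (isClosed_le continuous_const continuous_norm).inter Metric.isClosed_closedBall

lemma annf_hcs : HasCompactSupport (annf (d := d)) :=
  IsCompact.of_isClosed_subset (isCompact_closedBall 0 4) (isClosed_tsupport _)
    (annf_tsupport.trans Set.inter_subset_right)

lemma annf_zero_notin : (0 : EuclideanSpace ℝ (Fin d)) ∉ tsupport (annf (d := d)) := by
  intro h
  have := (annf_tsupport h).1
  simp only [Set.mem_setOf_eq, norm_zero] at this
  norm_num at this

lemma one_le_annf {v : EuclideanSpace ℝ (Fin d)} (h1 : 1 ≤ ‖v‖) (h2 : ‖v‖ ≤ 2) :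
    1 ≤ annf v := by
  unfold annf
  rw [ramp_of_ge (by norm_num) h1, ramp_of_le (by norm_num) h2]
  norm_num

lemma rpow_neg_eq_inv_rpow {r χ : ℝ} (hr : 0 < r) : r ^ (-χ-1) = (r ^ (χ+1))⁻¹ := by
  rw [show -χ-1 = -(χ+1) by ring, Real.rpow_neg hr.le]


lemma bfun_norm_bound {χ a b m : ℝ} (hχ : 0 < χ) {c : ℝ} (hc : 0 < c)
    {x : EuclideanSpace ℝ (Fin d)} (hcx : ⟪u, x⟫ = c) (ha2 : 1/2 ≤ a) (hab : a ≤ b)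
    (hm : 0 < m) {r : ℝ} (hr0 : 0 < r) :
    ‖bfun u a b m (r • x) / r ^ (χ+1)‖ ≤
      (Set.Ioi (1/(2*c))).indicator (fun s : ℝ => s ^ (-χ-1)) r := by
  by_cases hr2 : r ∈ Set.Ioi (1/(2*c))
  · rw [Set.indicator_of_mem hr2, rpow_neg_eq_inv_rpow hr0, Real.norm_eq_abs, abs_div,
      abs_of_nonneg (bfun_nonneg _), abs_of_pos (Real.rpow_pos_of_pos hr0 _), ← one_div]
    gcongr
    exact bfun_le_one _
  · have hb0 : bfun u a b m (r • x) = 0 := by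
      by_contra hne
      have h1 := (bfun_support hab hm hne).1
      rw [real_inner_smul_right, hcx] at h1
      rw [Set.mem_Ioi, not_lt] at hr2
      have h2 : r * (2*c) ≤ 1 := (le_div_iff₀ (by positivity)).1 hr2
      nlinarith
    rw [Set.indicator_of_notMem hr2, hb0, zero_div, norm_zero]

lemma inner_integral_zero {χ a b m : ℝ} (hab : a ≤ b) (ha2 : 1/2 ≤ a)
    {x : EuclideanSpace ℝ (Fin d)} (hcx : ⟪u, x⟫ ≤ 0) :
    ∫ r in Set.Ioi (0:ℝ), bfun u a b m (r • x) / r ^ (χ+1) = 0 := by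
  apply integral_eq_zero_of_ae
  filter_upwards [ae_restrict_mem (measurableSet_Ioi : MeasurableSet (Set.Ioi (0:ℝ)))]
    with r hr
  have h1 : ⟪u, r • x⟫ ≤ 0 := by
    rw [real_inner_smul_right]
    exact mul_nonpos_of_nonneg_of_nonpos (le_of_lt hr) hcx
  rw [Pi.zero_apply, bfun, ramp_of_le hab (by linarith), zero_mul, zero_div]

lemma integral_indicator_rpow {χ : ℝ} (hχ : 0 < χ) {e : ℝ} (he : 0 < e) :
    ∫ r in Set.Ioi (0:ℝ), (Set.Ioi e).indicator (fun s : ℝ => s ^ (-χ-1)) r = e ^ (-χ) / χ := by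
  rw [integral_indicator measurableSet_Ioi, Measure.restrict_restrict measurableSet_Ioi,
    Set.Ioi_inter_Ioi, max_eq_left he.le,
    integral_Ioi_rpow_of_lt (by linarith : -χ-1 < -1) he, show -χ-1+1 = -χ by ring,
    neg_div_neg_eq]

lemma bfun_integrand_aesm {χ a b m : ℝ} (hχ : 0 < χ) (x : EuclideanSpace ℝ (Fin d)) :
    AEStronglyMeasurable (fun r : ℝ => bfun u a b m (r • x) / r ^ (χ+1))
      ((volume : Measure ℝ).restrict (Set.Ioi 0)) := by
  apply Measurable.aestronglyMeasurable
  apply Measurable.div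
  · exact (bfun_continuous.comp (by fun_prop : Continuous fun r : ℝ => r • x)).measurable
  · exact (continuous_id.rpow_const (fun _ => Or.inr (by linarith))).measurable

lemma inner_integral_tendsto {χ : ℝ} (hχ : 0 < χ) {c : ℝ} (hc : 0 < c)
    {x : EuclideanSpace ℝ (Fin d)} (hx : ‖x‖ = 1) (hcx : ⟪u, x⟫ = c)
    {A B : ℕ → ℝ} (hA2 : ∀ n, 1/2 ≤ A n) (hAB : ∀ n, A n < B n)
    (hA : Tendsto A atTop (nhds 1)) (hB : Tendsto B atTop (nhds 1)) :
    Tendsto (fun n : ℕ => ∫ r in Set.Ioi (0:ℝ),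
        bfun u (A n) (B n) ((n:ℝ)+2) (r • x) / r ^ (χ+1)) atTop (nhds (c ^ χ / χ)) := by
  set μ0 := (volume : Measure ℝ).restrict (Set.Ioi 0) with hμ0
  have hFmeas : ∀ n : ℕ, AEStronglyMeasurable
      (fun r : ℝ => bfun u (A n) (B n) ((n:ℝ)+2) (r • x) / r ^ (χ+1)) μ0 := fun n =>
    bfun_integrand_aesm hχ x
  have hbint : Integrable ((Set.Ioi (1/(2*c))).indicator fun r : ℝ => r ^ (-χ-1)) μ0 := by
    have h1 : IntegrableOn (fun r : ℝ => r ^ (-χ-1)) (Set.Ioi (1/(2*c))) volume :=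
      integrableOn_Ioi_rpow_of_lt (by linarith) (by positivity)
    exact (h1.integrable_indicator measurableSet_Ioi).mono_measure Measure.restrict_le_self
  have hinne : ∀ r : ℝ, 0 < r → ⟪u, r • x⟫ = r * c := by
    intro r _
    rw [real_inner_smul_right, hcx]
  have hnrm : ∀ r : ℝ, 0 < r → ‖r • x‖ = r := by
    intro r hr
    rw [norm_smul, hx, Real.norm_eq_abs, abs_of_pos hr, mul_one]
  have h_bound : ∀ n : ℕ, ∀ᵐ r ∂μ0,
      ‖bfun u (A n) (B n) ((n:ℝ)+2) (r • x) / r ^ (χ+1)‖ ≤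
        (Set.Ioi (1/(2*c))).indicator (fun s : ℝ => s ^ (-χ-1)) r := by
    intro n
    filter_upwards [ae_restrict_mem (measurableSet_Ioi : MeasurableSet (Set.Ioi (0:ℝ)))]
      with r hr
    exact bfun_norm_bound hχ hc hcx (hA2 n) (hAB n).le (by positivity) hr
  have h_lim : ∀ᵐ r ∂μ0, Tendsto (fun n : ℕ => bfun u (A n) (B n) ((n:ℝ)+2) (r • x) / r ^ (χ+1))
      atTop (nhds ((Set.Ioi (1/c)).indicator (fun r : ℝ => r ^ (-χ-1)) r)) := by
    have hsing : ∀ᵐ r ∂μ0, r ≠ 1/c := by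
      refine (ae_restrict_of_ae ?_)
      have : {r : ℝ | ¬ r ≠ 1/c} = {1/c} := by ext y; simp
      rw [ae_iff, this]
      exact Real.volume_singleton
    filter_upwards [ae_restrict_mem (measurableSet_Ioi : MeasurableSet (Set.Ioi (0:ℝ))), hsing]
      with r hr hne
    have hr0 : (0:ℝ) < r := hr
    rcases lt_or_gt_of_ne hne with hlt | hgt
    · -- r < 1/c : limit 0
      have hrc : r * c < 1 := by
        have := (lt_div_iff₀ hc).1 hlt
        linarith
      have hGr : (Set.Ioi (1/c)).indicator (fun r : ℝ => r ^ (-χ-1)) r = 0 :=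
        Set.indicator_of_notMem (by simpa using hlt.le.not_gt ∘ fun h => h) _
      rw [hGr]
      have hev : ∀ᶠ n : ℕ in atTop,
          bfun u (A n) (B n) ((n:ℝ)+2) (r • x) / r ^ (χ+1) = 0 := by
        filter_upwards [hA.eventually (eventually_ge_nhds hrc)] with n hn
        have : ramp (A n) (B n) ⟪u, r • x⟫ = 0 := by
          rw [hinne r hr0]
          exact ramp_of_le (hAB n).le hn
        rw [bfun, this, zero_mul, zero_div]
      exact Tendsto.congr' (hev.mono fun n h => h.symm) tendsto_const_nhds
    · -- r > 1/c : limit r ^ (-χ-1)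
      have hrc : 1 < r * c := by
        have := (div_lt_iff₀ hc).1 hgt
        linarith
      rw [Set.indicator_of_mem (Set.mem_Ioi.2 hgt)]
      have hev : ∀ᶠ n : ℕ in atTop,
          bfun u (A n) (B n) ((n:ℝ)+2) (r • x) / r ^ (χ+1) = r ^ (-χ-1) := by
        have hev1 : ∀ᶠ n : ℕ in atTop, B n ≤ r * c := hB.eventually (eventually_le_nhds hrc)
        have hev2 : ∀ᶠ n : ℕ in atTop, r ≤ (n:ℝ) :=
          eventually_atTop.2 ⟨⌈r⌉₊, fun n hn => (Nat.le_ceil r).trans (by exact_mod_cast hn)⟩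
        filter_upwards [hev1, hev2] with n hn1 hn2
        have e1 : ramp (A n) (B n) ⟪u, r • x⟫ = 1 := by
          rw [hinne r hr0]; exact ramp_of_ge (hAB n) hn1
        have e2 : ramp ((n:ℝ)+2) (2*((n:ℝ)+2)) ‖r • x‖ = 0 := by
          rw [hnrm r hr0]
          exact ramp_of_le (by linarith [(Nat.cast_nonneg n : (0:ℝ) ≤ n)]) (by linarith [(Nat.cast_nonneg n : (0:ℝ) ≤ n)])
        rw [bfun, e1, e2, one_mul, sub_zero, one_div, ← rpow_neg_eq_inv_rpow hr0]
      exact Tendsto.congr' (hev.mono fun n h => h.symm) tendsto_const_nhds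
  have := tendsto_integral_of_dominated_convergence _ hFmeas hbint h_bound h_lim
  convert this using 2
  rw [integral_indicator measurableSet_Ioi, Measure.restrict_restrict measurableSet_Ioi,
    Set.Ioi_inter_Ioi, max_eq_left (by positivity : (0:ℝ) ≤ 1/c)]
  rw [integral_Ioi_rpow_of_lt (by linarith) (by positivity), show -χ-1+1 = -χ by ring]
  rw [one_div, Real.rpow_neg (inv_nonneg.2 hc.le), Real.inv_rpow hc.le, inv_inv,
    neg_div_neg_eq]

lemma outer_tendsto {χ : ℝ} (hχ : 0 < χ) (νinf : Measure (EuclideanSpace ℝ (Fin d)))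
    [IsFiniteMeasure νinf]
    (hsph : νinf (Metric.sphere (0 : EuclideanSpace ℝ (Fin d)) 1)ᶜ = 0)
    (hu : ‖u‖ = 1)
    (hnull : νinf {x | ⟪u, x⟫ = 0} = 0)
    {A B : ℕ → ℝ} (hA2 : ∀ n, 1/2 ≤ A n) (hAB : ∀ n, A n < B n)
    (hA : Tendsto A atTop (nhds 1)) (hB : Tendsto B atTop (nhds 1)) :
    Tendsto (fun n : ℕ => ∫ x, (∫ r in Set.Ioi (0:ℝ),
        bfun u (A n) (B n) ((n:ℝ)+2) (r • x) / r ^ (χ+1)) ∂νinf) atTop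
      (nhds (∫ x, (max ⟪u, x⟫ 0) ^ χ / χ ∂νinf)) := by
  have hae1 : ∀ᵐ x ∂νinf, ‖x‖ = 1 := by
    rw [ae_iff]
    refine measure_mono_null (fun y hy => ?_) hsph
    simp only [Set.mem_compl_iff, Metric.mem_sphere, dist_zero_right]
    exact hy
  have hae2 : ∀ᵐ x ∂νinf, ⟪u, x⟫ ≠ 0 := by
    rw [ae_iff]
    simpa using hnull
  apply tendsto_integral_of_dominated_convergence (fun _ => (2:ℝ) ^ χ / χ)
  · intro n
    apply StronglyMeasurable.aestronglyMeasurable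
    apply MeasureTheory.StronglyMeasurable.integral_prod_right'
      (f := fun p : EuclideanSpace ℝ (Fin d) × ℝ =>
        bfun u (A n) (B n) ((n:ℝ)+2) (p.2 • p.1) / p.2 ^ (χ+1))
    apply Measurable.stronglyMeasurable
    apply Measurable.div
    · exact (bfun_continuous.comp (continuous_snd.smul continuous_fst)).measurable
    · exact (continuous_snd.rpow_const (fun _ => Or.inr (by linarith))).measurable
  · exact integrable_const _
  · intro n
    filter_upwards [hae1, hae2] with x hx hcx0
    rcases lt_or_gt_of_ne hcx0 with hneg | hpos
    · rw [inner_integral_zero (hAB n).le (hA2 n) hneg.le, norm_zero]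
      positivity
    · set c := ⟪u, x⟫ with hc
      have hc1 : c ≤ 1 := by
        calc c ≤ ‖u‖ * ‖x‖ := real_inner_le_norm u x
        _ = 1 := by rw [hu, hx, mul_one]
      have hbint : Integrable ((Set.Ioi (1/(2*c))).indicator fun s : ℝ => s ^ (-χ-1))
          ((volume : Measure ℝ).restrict (Set.Ioi 0)) := by
        have h1 : IntegrableOn (fun s : ℝ => s ^ (-χ-1)) (Set.Ioi (1/(2*c))) volume :=
          integrableOn_Ioi_rpow_of_lt (by linarith) (by positivity)
        exact (h1.integrable_indicator measurableSet_Ioi).mono_measure Measure.restrict_le_self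
      calc ‖∫ r in Set.Ioi (0:ℝ), bfun u (A n) (B n) ((n:ℝ)+2) (r • x) / r ^ (χ+1)‖
          ≤ ∫ r in Set.Ioi (0:ℝ), (Set.Ioi (1/(2*c))).indicator (fun s : ℝ => s ^ (-χ-1)) r := by
            apply norm_integral_le_of_norm_le hbint
            filter_upwards [ae_restrict_mem (measurableSet_Ioi :
              MeasurableSet (Set.Ioi (0:ℝ)))] with r hr
            exact bfun_norm_bound hχ hpos rfl (hA2 n) (hAB n).le (by positivity) hr
        _ = (1/(2*c)) ^ (-χ) / χ := integral_indicator_rpow hχ (by positivity)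
        _ = (2*c) ^ χ / χ := by
            rw [one_div, Real.rpow_neg (by positivity), Real.inv_rpow (by positivity), inv_inv]
        _ ≤ (2:ℝ) ^ χ / χ :=
            (div_le_div_iff_of_pos_right hχ).2 (Real.rpow_le_rpow (by positivity) (by linarith) hχ.le)
  · filter_upwards [hae1, hae2] with x hx hcx0
    rcases lt_or_gt_of_ne hcx0 with hneg | hpos
    · have h0 : ∀ n : ℕ, ∫ r in Set.Ioi (0:ℝ),
          bfun u (A n) (B n) ((n:ℝ)+2) (r • x) / r ^ (χ+1) = 0 := fun n =>
        inner_integral_zero (hAB n).le (hA2 n) hneg.le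
      have hmax : max ⟪u, x⟫ 0 = 0 := max_eq_right hneg.le
      rw [hmax, Real.zero_rpow hχ.ne', zero_div]
      simpa [h0] using (tendsto_const_nhds : Tendsto (fun _ : ℕ => (0:ℝ)) atTop (nhds 0))
    · have hmax : max ⟪u, x⟫ 0 = ⟪u, x⟫ := max_eq_left hpos.le
      rw [hmax]
      exact inner_integral_tendsto hχ hpos hx rfl hA2 hAB hA hB

lemma annf_le_one (v : EuclideanSpace ℝ (Fin d)) : annf v ≤ 1 :=
  mul_le_one₀ (ramp_le_one _ _ _) (by linarith [ramp_le_one 2 (2*2) ‖v‖])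
    (by linarith [ramp_nonneg 2 (2*2) ‖v‖])

lemma toReal_split (ν : Measure (EuclideanSpace ℝ (Fin d))) [IsFiniteMeasure ν]
    {A A1 A2 : Set (EuclideanSpace ℝ (Fin d))} (hsub : A ⊆ A1 ∪ A2) :
    (ν A).toReal ≤ (ν A1).toReal + (ν A2).toReal := by
  have h := (measure_mono hsub).trans (measure_union_le (μ := ν) A1 A2)
  have h2 := ENNReal.toReal_mono (by finiteness) h
  rwa [ENNReal.toReal_add (measure_ne_top _ _) (measure_ne_top _ _)] at h2

lemma tail_bound {χ : ℝ} (hχ : 0 < χ) (ν : Measure (EuclideanSpace ℝ (Fin d)))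
    [IsProbabilityMeasure ν] {C₀ : ℝ}
    (hC : Tendsto (fun t : ℝ => t ^ χ * ∫ v, annf (t⁻¹ • v) ∂ν) atTop (nhds C₀)) :
    ∃ C' : ℝ, 0 ≤ C' ∧ ∃ t₀ : ℝ, 1 ≤ t₀ ∧
      ∀ s, t₀ ≤ s → s ^ χ * (ν {v | s ≤ ‖v‖}).toReal ≤ C' := by
  set C : ℝ := |C₀| + 1 with hCdef
  have hCpos : 0 < C := by positivity
  have hev : ∀ᶠ t : ℝ in atTop, t ^ χ * ∫ v, annf (t⁻¹ • v) ∂ν ≤ C :=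
    hC.eventually (eventually_le_nhds (by
      have := abs_nonneg C₀
      have := le_abs_self C₀
      linarith))
  obtain ⟨t₁, ht₁⟩ := (eventually_atTop).1 hev
  set t₀ : ℝ := max t₁ 1 with ht₀def
  have ht₀1 : (1:ℝ) ≤ t₀ := le_max_right _ _
  -- annulus bound
  have hann : ∀ s : ℝ, t₀ ≤ s →
      s ^ χ * (ν {v | s ≤ ‖v‖ ∧ ‖v‖ ≤ 2*s}).toReal ≤ C := by
    intro s hs
    have hs0 : (0:ℝ) < s := lt_of_lt_of_le (by linarith) hs
    have hint : Integrable (fun v => annf (s⁻¹ • v)) ν := by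
      apply Integrable.mono' (integrable_const (1:ℝ))
      · exact (annf_continuous.comp (by fun_prop)).measurable.aestronglyMeasurable
      · refine Eventually.of_forall fun v => ?_
        rw [Real.norm_eq_abs, abs_of_nonneg (annf_nonneg _)]
        exact annf_le_one _
    have key : ν {v | s ≤ ‖v‖ ∧ ‖v‖ ≤ 2*s} ≤ ENNReal.ofReal (∫ v, annf (s⁻¹ • v) ∂ν) := by
      apply hint.measure_le_integral (Eventually.of_forall fun v => annf_nonneg _)
      intro v hv
      obtain ⟨hv1, hv2⟩ := hv
      have hnv : ‖s⁻¹ • v‖ = ‖v‖ / s := by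
        rw [norm_smul, Real.norm_eq_abs, abs_of_pos (inv_pos.2 hs0), inv_mul_eq_div]
      apply one_le_annf
      · rw [hnv]; exact (one_le_div hs0).2 hv1
      · rw [hnv]; exact (div_le_iff₀ hs0).2 (by linarith)
    have h2 : (ν {v | s ≤ ‖v‖ ∧ ‖v‖ ≤ 2*s}).toReal ≤ ∫ v, annf (s⁻¹ • v) ∂ν := by
      have := ENNReal.toReal_mono ENNReal.ofReal_ne_top key
      rwa [ENNReal.toReal_ofReal (integral_nonneg fun v => annf_nonneg _)] at this
    calc s ^ χ * (ν {v | s ≤ ‖v‖ ∧ ‖v‖ ≤ 2*s}).toReal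
        ≤ s ^ χ * ∫ v, annf (s⁻¹ • v) ∂ν := by
          apply mul_le_mul_of_nonneg_left h2 (Real.rpow_nonneg hs0.le _)
      _ ≤ C := ht₁ s (le_trans (le_max_left _ _) hs)
  -- geometric constant
  have h2χ : (2:ℝ) ^ (-χ) < 1 :=
    Real.rpow_lt_one_of_one_lt_of_neg (by norm_num) (by linarith)
  have h2χ0 : (0:ℝ) ≤ (2:ℝ) ^ (-χ) := Real.rpow_nonneg (by norm_num) _
  have hgeom : (0:ℝ) < 1 - 2 ^ (-χ) := by linarith
  refine ⟨C * (1 - 2 ^ (-χ))⁻¹, by positivity, t₀, ht₀1, fun s hs => ?_⟩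
  have hs0 : (0:ℝ) < s := lt_of_lt_of_le (by linarith) hs
  -- dyadic decomposition
  have hdyad : ∀ N : ℕ, (ν {v | s ≤ ‖v‖}).toReal ≤
      (∑ k ∈ Finset.range N, (ν {v | 2^k * s ≤ ‖v‖ ∧ ‖v‖ ≤ 2*(2^k*s)}).toReal) +
        (ν {v | 2^N * s ≤ ‖v‖}).toReal := by
    intro N
    induction N with
    | zero => simp
    | succ N ih =>
      refine ih.trans ?_
      rw [Finset.sum_range_succ, add_assoc]
      gcongr
      apply toReal_split
      intro v hv
      rcases le_or_gt ‖v‖ (2*(2^N*s)) with h | h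
      · exact Or.inl ⟨hv, h⟩
      · refine Or.inr ?_
        simp only [Set.mem_setOf_eq]
        calc 2^(N+1)*s = 2*(2^N*s) := by ring
          _ ≤ ‖v‖ := h.le
  -- bound each annulus term
  have hterm : ∀ k : ℕ, s ^ χ * (ν {v | 2^k * s ≤ ‖v‖ ∧ ‖v‖ ≤ 2*(2^k*s)}).toReal ≤
      C * ((2:ℝ) ^ (-χ)) ^ k := by
    intro k
    have hk1 : (1:ℝ) ≤ 2^k := one_le_pow₀ (by norm_num)
    have hks : t₀ ≤ 2^k * s := le_trans hs (le_mul_of_one_le_left hs0.le hk1)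
    have := hann (2^k*s) hks
    have hsplit : ((2:ℝ)^k*s) ^ χ = ((2:ℝ)^k) ^ χ * s ^ χ :=
      Real.mul_rpow (by positivity) hs0.le
    have hpow : ((2:ℝ)^k) ^ χ * ((2:ℝ) ^ (-χ)) ^ k = 1 := by
      rw [← Real.rpow_natCast ((2:ℝ) ^ (-χ)) k, ← Real.rpow_natCast (2:ℝ) k,
        ← Real.rpow_mul (by norm_num), ← Real.rpow_mul (by norm_num),
        ← Real.rpow_add (by norm_num)]
      rw [show (k:ℝ)*χ + -χ*(k:ℝ) = 0 by ring, Real.rpow_zero]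
    have hbk : ((2:ℝ) ^ (-χ)) ^ k = (((2:ℝ)^k) ^ χ)⁻¹ :=
      eq_inv_of_mul_eq_one_left (by rw [mul_comm] at hpow; exact hpow)
    have hkpos : (0:ℝ) < ((2:ℝ)^k) ^ χ := Real.rpow_pos_of_pos (by positivity) χ
    rw [hbk, ← div_eq_mul_inv, le_div_iff₀ hkpos]
    rw [hsplit] at this
    set T := (ν {v | 2^k * s ≤ ‖v‖ ∧ ‖v‖ ≤ 2*(2^k*s)}).toReal with hT
    calc s ^ χ * T * ((2:ℝ)^k) ^ χ = ((2:ℝ)^k) ^ χ * s ^ χ * T := by ring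
      _ ≤ C := this
  -- remainder tends to zero
  have hrem : Tendsto (fun N : ℕ => s ^ χ * (ν {v | 2^N * s ≤ ‖v‖}).toReal) atTop (nhds 0) := by
    have hmeas : ∀ N : ℕ, NullMeasurableSet {v : EuclideanSpace ℝ (Fin d) | 2^N * s ≤ ‖v‖} ν :=
      fun N => ((isClosed_le continuous_const continuous_norm).measurableSet).nullMeasurableSet
    have hant : Antitone fun N : ℕ => {v : EuclideanSpace ℝ (Fin d) | 2^N * s ≤ ‖v‖} := by
      intro N M hNM v hv
      simp only [Set.mem_setOf_eq] at hv ⊢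
      have : (2:ℝ)^N ≤ 2^M := pow_le_pow_right₀ (by norm_num) hNM
      nlinarith
    have hint : ⋂ N : ℕ, {v : EuclideanSpace ℝ (Fin d) | 2^N * s ≤ ‖v‖} = ∅ := by
      ext v
      simp only [Set.mem_iInter, Set.mem_setOf_eq, Set.mem_empty_iff_false, iff_false, not_forall,
        not_le]
      obtain ⟨N, hN⟩ := pow_unbounded_of_one_lt (‖v‖ / s) (by norm_num : (1:ℝ) < 2)
      exact ⟨N, by have := (div_lt_iff₀ hs0).1 hN; linarith⟩
    have h1 := tendsto_measure_iInter_atTop hmeas hant ⟨0, measure_ne_top _ _⟩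
    rw [hint, measure_empty] at h1
    have h2 := (ENNReal.tendsto_toReal ENNReal.zero_ne_top).comp h1
    simp only [Function.comp, ENNReal.toReal_zero] at h2
    simpa using h2.const_mul (s ^ χ)
  -- combine
  have hkey : ∀ N : ℕ, s ^ χ * (ν {v | s ≤ ‖v‖}).toReal ≤
      C * (1 - 2 ^ (-χ))⁻¹ + s ^ χ * (ν {v | 2^N * s ≤ ‖v‖}).toReal := by
    intro N
    have h1 := hdyad N
    have h2 : s ^ χ * (ν {v | s ≤ ‖v‖}).toReal ≤
        (∑ k ∈ Finset.range N, s ^ χ * (ν {v | 2^k * s ≤ ‖v‖ ∧ ‖v‖ ≤ 2*(2^k*s)}).toReal) +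
          s ^ χ * (ν {v | 2^N * s ≤ ‖v‖}).toReal := by
      rw [← Finset.mul_sum, ← mul_add]
      exact mul_le_mul_of_nonneg_left h1 (Real.rpow_nonneg hs0.le _)
    refine h2.trans ?_
    gcongr
    calc ∑ k ∈ Finset.range N, s ^ χ * (ν {v | 2^k * s ≤ ‖v‖ ∧ ‖v‖ ≤ 2*(2^k*s)}).toReal
        ≤ ∑ k ∈ Finset.range N, C * ((2:ℝ) ^ (-χ)) ^ k :=
          Finset.sum_le_sum fun k _ => hterm k
      _ = C * ∑ k ∈ Finset.range N, ((2:ℝ) ^ (-χ)) ^ k := by rw [Finset.mul_sum]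
      _ ≤ C * (1 - 2 ^ (-χ))⁻¹ := by
          apply mul_le_mul_of_nonneg_left _ hCpos.le
          rw [← tsum_geometric_of_lt_one h2χ0 h2χ]
          exact Summable.sum_le_tsum _ (fun k _ => pow_nonneg h2χ0 k)
            (summable_geometric_of_lt_one h2χ0 h2χ)
  have hfin : Tendsto (fun N : ℕ => C * (1 - 2 ^ (-χ))⁻¹ +
      s ^ χ * (ν {v | 2^N * s ≤ ‖v‖}).toReal) atTop (nhds (C * (1 - 2 ^ (-χ))⁻¹ + 0)) :=
    tendsto_const_nhds.add hrem
  have := ge_of_tendsto hfin (Eventually.of_forall hkey)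
  linarith [this]

/-- If `t^χ (δ_{t⁻¹} * ν) → ν_∞ ⊗ ℓ^χ` weakly on compactly supported continuous
functions on `ℝ^d \ {0}`, then for any unit vector `u` with
`ν_∞{x : ⟨u,x⟩ > 0} > 0` and `ν_∞{x : ⟨u,x⟩ = 0} = 0`, one has
`lim_t t^χ ν{v : ⟨u,v⟩ ≥ t} = (1/χ) ∫ ⟨u,x⟩₊^χ dν_∞(x) > 0`. -/
theorem stmt17 {d : ℕ} (χ : ℝ) (hχ : 0 < χ)
    (ν : Measure (EuclideanSpace ℝ (Fin d))) [IsProbabilityMeasure ν]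
    (νinf : Measure (EuclideanSpace ℝ (Fin d))) [IsFiniteMeasure νinf]
    (hsph : νinf (Metric.sphere (0 : EuclideanSpace ℝ (Fin d)) 1)ᶜ = 0)
    (hconv : ∀ f : EuclideanSpace ℝ (Fin d) → ℝ, Continuous f → HasCompactSupport f →
      (0 : EuclideanSpace ℝ (Fin d)) ∉ tsupport f →
      Tendsto (fun t : ℝ => t ^ χ * ∫ v, f (t⁻¹ • v) ∂ν) atTop
        (nhds (∫ x, (∫ r in Set.Ioi (0 : ℝ), f (r • x) / r ^ (χ + 1)) ∂νinf)))
    (u : EuclideanSpace ℝ (Fin d)) (hu : ‖u‖ = 1)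
    (hpos : νinf {x | 0 < ⟪u, x⟫} ≠ 0)
    (hnull : νinf {x | ⟪u, x⟫ = 0} = 0) :
    Tendsto (fun t : ℝ => t ^ χ * (ν {v | t ≤ ⟪u, v⟫}).toReal) atTop
      (nhds ((1 / χ) * ∫ x, (max ⟪u, x⟫ 0) ^ χ ∂νinf)) ∧
    0 < (1 / χ) * ∫ x, (max ⟪u, x⟫ 0) ^ χ ∂νinf := by
  have hae1 : ∀ᵐ x ∂νinf, ‖x‖ = 1 := by
    rw [ae_iff]
    refine measure_mono_null (fun y hy => ?_) hsph
    simp only [Set.mem_compl_iff, Metric.mem_sphere, dist_zero_right]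
    exact hy
  -- positivity of the limit
  have gcont : Continuous fun x : EuclideanSpace ℝ (Fin d) => (max ⟪u, x⟫ 0) ^ χ :=
    ((continuous_const.inner continuous_id).max continuous_const).rpow_const
      (fun _ => Or.inr hχ.le)
  have hgint : Integrable (fun x => (max ⟪u, x⟫ 0) ^ χ) νinf := by
    apply Integrable.mono' (integrable_const (1:ℝ))
    · exact gcont.measurable.aestronglyMeasurable
    · filter_upwards [hae1] with x hx
      rw [Real.norm_eq_abs, abs_of_nonneg (Real.rpow_nonneg (le_max_right _ _) _)]
      apply Real.rpow_le_one (le_max_right _ _) _ hχ.le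
      have h1 : ⟪u, x⟫ ≤ 1 := by
        calc ⟪u, x⟫ ≤ ‖u‖ * ‖x‖ := real_inner_le_norm u x
          _ = 1 := by rw [hu, hx, mul_one]
      exact max_le h1 zero_le_one
  have hIpos : 0 < ∫ x, (max ⟪u, x⟫ 0) ^ χ ∂νinf := by
    rw [integral_pos_iff_support_of_nonneg (fun x => Real.rpow_nonneg (le_max_right _ _) _) hgint]
    have hsub : {x : EuclideanSpace ℝ (Fin d) | 0 < ⟪u, x⟫} ⊆
        Function.support fun x => (max ⟪u, x⟫ 0) ^ χ := by
      intro x hx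
      have : (0:ℝ) < (max ⟪u, x⟫ 0) ^ χ :=
        Real.rpow_pos_of_pos (lt_max_of_lt_left hx) _
      exact this.ne'
    calc (0:ℝ≥0∞) < νinf {x | 0 < ⟪u, x⟫} := zero_lt_iff.2 hpos
      _ ≤ νinf (Function.support fun x => (max ⟪u, x⟫ 0) ^ χ) := measure_mono hsub
  have hLpos : 0 < (1 / χ) * ∫ x, (max ⟪u, x⟫ 0) ^ χ ∂νinf := by positivity
  refine ⟨?_, hLpos⟩
  -- sequences
  have hε0 : Tendsto (fun n : ℕ => 1/((n:ℝ)+2)) atTop (nhds 0) := by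
    simp only [one_div]
    exact (tendsto_atTop_add_const_right _ 2 tendsto_natCast_atTop_atTop).inv_tendsto_atTop
  have hεle : ∀ n : ℕ, 1/((n:ℝ)+2) ≤ 1/2 :=
    fun n => one_div_le_one_div_of_le (by norm_num) (by linarith [(Nat.cast_nonneg n : (0:ℝ) ≤ n)])
  have hεpos : ∀ n : ℕ, 0 < 1/((n:ℝ)+2) := fun n => by positivity
  rw [show (1/χ) * ∫ x, (max ⟪u, x⟫ 0) ^ χ ∂νinf
      = ∫ x, (max ⟪u, x⟫ 0) ^ χ / χ ∂νinf by rw [integral_div]; ring]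
  set I := ∫ x, (max ⟪u, x⟫ 0) ^ χ / χ ∂νinf with hI
  -- sequence data
  have hBf : Tendsto (fun n : ℕ => 1 + 1/((n:ℝ)+2)) atTop (nhds 1) := by
    have h1 : Tendsto (fun _ : ℕ => (1:ℝ)) atTop (nhds 1) := tendsto_const_nhds
    simpa using h1.add hε0
  have hAg : Tendsto (fun n : ℕ => 1 - 1/((n:ℝ)+2)) atTop (nhds 1) := by
    have h1 : Tendsto (fun _ : ℕ => (1:ℝ)) atTop (nhds 1) := tendsto_const_nhds
    simpa using h1.sub hε0
  have hAg2 : ∀ n : ℕ, 1/2 ≤ 1 - 1/((n:ℝ)+2) := fun n => by linarith [hεle n]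
  have hAgB : ∀ n : ℕ, 1 - 1/((n:ℝ)+2) < 1 := fun n => by linarith [hεpos n]
  have hAfB : ∀ n : ℕ, (1:ℝ) < 1 + 1/((n:ℝ)+2) := fun n => by linarith [hεpos n]
  have hm : ∀ n : ℕ, (0:ℝ) < (n:ℝ)+2 := fun n => by positivity
  -- hconv applied to the lower and upper bump functions
  have hcf : ∀ n : ℕ, Tendsto (fun t : ℝ =>
      t ^ χ * ∫ v, bfun u 1 (1+1/((n:ℝ)+2)) ((n:ℝ)+2) (t⁻¹ • v) ∂ν) atTop
      (nhds (∫ x, (∫ r in Set.Ioi (0:ℝ),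
        bfun u 1 (1+1/((n:ℝ)+2)) ((n:ℝ)+2) (r • x) / r ^ (χ+1)) ∂νinf)) :=
    fun n => hconv _ bfun_continuous (bfun_hcs (hAfB n).le (hm n))
      (bfun_zero_notin one_pos (hAfB n).le (hm n))
  have hcg : ∀ n : ℕ, Tendsto (fun t : ℝ =>
      t ^ χ * ∫ v, bfun u (1-1/((n:ℝ)+2)) 1 ((n:ℝ)+2) (t⁻¹ • v) ∂ν) atTop
      (nhds (∫ x, (∫ r in Set.Ioi (0:ℝ),
        bfun u (1-1/((n:ℝ)+2)) 1 ((n:ℝ)+2) (r • x) / r ^ (χ+1)) ∂νinf)) :=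
    fun n => hconv _ bfun_continuous (bfun_hcs (hAgB n).le (hm n))
      (bfun_zero_notin (by linarith [hAg2 n]) (hAgB n).le (hm n))
  -- limits of the iterated integrals
  have hLf : Tendsto (fun n : ℕ => ∫ x, (∫ r in Set.Ioi (0:ℝ),
      bfun u 1 (1+1/((n:ℝ)+2)) ((n:ℝ)+2) (r • x) / r ^ (χ+1)) ∂νinf) atTop (nhds I) :=
    outer_tendsto hχ νinf hsph hu hnull (fun _ => by norm_num) hAfB tendsto_const_nhds hBf
  have hLg : Tendsto (fun n : ℕ => ∫ x, (∫ r in Set.Ioi (0:ℝ),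
      bfun u (1-1/((n:ℝ)+2)) 1 ((n:ℝ)+2) (r • x) / r ^ (χ+1)) ∂νinf) atTop (nhds I) :=
    outer_tendsto hχ νinf hsph hu hnull hAg2 hAgB hAg tendsto_const_nhds
  -- tail control
  obtain ⟨C', hC'0, t₀, ht₀1, htail⟩ :=
    tail_bound hχ ν (hconv annf annf_continuous annf_hcs annf_zero_notin)
  -- lower bound on the quantity of interest
  have hlow : ∀ n : ℕ, ∀ t : ℝ, 1 ≤ t →
      t ^ χ * ∫ v, bfun u 1 (1+1/((n:ℝ)+2)) ((n:ℝ)+2) (t⁻¹ • v) ∂ν ≤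
        t ^ χ * (ν {v | t ≤ ⟪u, v⟫}).toReal := by
    intro n t ht
    have ht0 : (0:ℝ) < t := by linarith
    apply mul_le_mul_of_nonneg_left _ (Real.rpow_nonneg ht0.le _)
    have h := integral_le_measure (μ := ν) (s := {v | t ≤ ⟪u, v⟫})
      (f := fun v => bfun u 1 (1+1/((n:ℝ)+2)) ((n:ℝ)+2) (t⁻¹ • v))
      (fun v _ => bfun_le_one _) (fun v hv => ?_)
    · exact (ENNReal.ofReal_le_iff_le_toReal (measure_ne_top ν _)).1 h
    · simp only [Set.mem_compl_iff, Set.mem_setOf_eq, not_le] at hv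
      have h1 : ⟪u, t⁻¹ • v⟫ ≤ 1 := by
        rw [real_inner_smul_right, inv_mul_eq_div]
        exact (div_le_one ht0).2 hv.le
      show bfun u 1 (1+1/((n:ℝ)+2)) ((n:ℝ)+2) (t⁻¹ • v) ≤ 0
      rw [bfun, ramp_of_le (hAfB n).le h1, zero_mul]
  -- upper bound on the quantity of interest
  have hup : ∀ n : ℕ, ∀ t : ℝ, max t₀ 1 ≤ t →
      t ^ χ * (ν {v | t ≤ ⟪u, v⟫}).toReal ≤
        t ^ χ * (∫ v, bfun u (1-1/((n:ℝ)+2)) 1 ((n:ℝ)+2) (t⁻¹ • v) ∂ν) +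
          C' * ((n:ℝ)+2) ^ (-χ) := by
    intro n t ht
    have ht1 : (1:ℝ) ≤ t := le_trans (le_max_right _ _) ht
    have ht0 : (0:ℝ) < t := by linarith
    have htt0 : t₀ ≤ t := le_trans (le_max_left _ _) ht
    have hn1 : (1:ℝ) ≤ (n:ℝ)+2 := by linarith [(Nat.cast_nonneg n : (0:ℝ) ≤ n)]
    have hsplit : (ν {v | t ≤ ⟪u, v⟫}).toReal ≤
        (ν {v | t ≤ ⟪u, v⟫ ∧ ‖v‖ ≤ ((n:ℝ)+2)*t}).toReal +
          (ν {v | ((n:ℝ)+2)*t ≤ ‖v‖}).toReal := by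
      apply toReal_split
      intro v hv
      rcases le_total ‖v‖ (((n:ℝ)+2)*t) with h | h
      · exact Or.inl ⟨hv, h⟩
      · exact Or.inr h
    have h1 : (ν {v | t ≤ ⟪u, v⟫ ∧ ‖v‖ ≤ ((n:ℝ)+2)*t}).toReal ≤
        ∫ v, bfun u (1-1/((n:ℝ)+2)) 1 ((n:ℝ)+2) (t⁻¹ • v) ∂ν := by
      have hint : Integrable (fun v => bfun u (1-1/((n:ℝ)+2)) 1 ((n:ℝ)+2) (t⁻¹ • v)) ν := by
        apply Integrable.mono' (integrable_const (1:ℝ))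
        · exact (bfun_continuous.comp (by fun_prop)).measurable.aestronglyMeasurable
        · refine Eventually.of_forall fun v => ?_
          rw [Real.norm_eq_abs, abs_of_nonneg (bfun_nonneg _)]
          exact bfun_le_one _
      have key := hint.measure_le_integral (Eventually.of_forall fun v => bfun_nonneg _)
        (s := {v | t ≤ ⟪u, v⟫ ∧ ‖v‖ ≤ ((n:ℝ)+2)*t}) (fun v hv => ?_)
      · have h2 := ENNReal.toReal_mono ENNReal.ofReal_ne_top key
        rwa [ENNReal.toReal_ofReal (integral_nonneg fun v => bfun_nonneg _)] at h2
      · obtain ⟨hv1, hv2⟩ := hv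
        show (1:ℝ) ≤ bfun u (1-1/((n:ℝ)+2)) 1 ((n:ℝ)+2) (t⁻¹ • v)
        have hnv : ‖t⁻¹ • v‖ = ‖v‖ / t := by
          rw [norm_smul, Real.norm_eq_abs, abs_of_pos (inv_pos.2 ht0), inv_mul_eq_div]
        have e1 : ramp (1-1/((n:ℝ)+2)) 1 ⟪u, t⁻¹ • v⟫ = 1 := by
          apply ramp_of_ge (hAgB n)
          rw [real_inner_smul_right, inv_mul_eq_div]
          exact (one_le_div ht0).2 hv1
        have e2 : ramp ((n:ℝ)+2) (2*((n:ℝ)+2)) ‖t⁻¹ • v‖ = 0 := by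
          apply ramp_of_le (by linarith)
          rw [hnv]
          exact (div_le_iff₀ ht0).2 hv2
        rw [bfun, e1, e2]
        norm_num
    have h2 : t ^ χ * (ν {v | ((n:ℝ)+2)*t ≤ ‖v‖}).toReal ≤ C' * ((n:ℝ)+2) ^ (-χ) := by
      have htail' := htail (((n:ℝ)+2)*t) (le_trans htt0 (le_mul_of_one_le_left ht0.le hn1))
      have hP : (0:ℝ) < ((n:ℝ)+2) ^ χ := Real.rpow_pos_of_pos (hm n) _
      have hmul : (((n:ℝ)+2)*t) ^ χ = ((n:ℝ)+2)^χ * t^χ := Real.mul_rpow (hm n).le ht0.le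
      rw [Real.rpow_neg (hm n).le, ← div_eq_mul_inv, le_div_iff₀ hP]
      rw [hmul] at htail'
      calc t ^ χ * (ν {v | ((n:ℝ)+2)*t ≤ ‖v‖}).toReal * ((n:ℝ)+2)^χ
          = ((n:ℝ)+2)^χ * t^χ * (ν {v | ((n:ℝ)+2)*t ≤ ‖v‖}).toReal := by ring
        _ ≤ C' := htail'
    calc t ^ χ * (ν {v | t ≤ ⟪u, v⟫}).toReal
        ≤ t ^ χ * ((ν {v | t ≤ ⟪u, v⟫ ∧ ‖v‖ ≤ ((n:ℝ)+2)*t}).toReal +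
            (ν {v | ((n:ℝ)+2)*t ≤ ‖v‖}).toReal) :=
          mul_le_mul_of_nonneg_left hsplit (Real.rpow_nonneg ht0.le _)
      _ = t ^ χ * (ν {v | t ≤ ⟪u, v⟫ ∧ ‖v‖ ≤ ((n:ℝ)+2)*t}).toReal +
            t ^ χ * (ν {v | ((n:ℝ)+2)*t ≤ ‖v‖}).toReal := mul_add _ _ _
      _ ≤ t ^ χ * (∫ v, bfun u (1-1/((n:ℝ)+2)) 1 ((n:ℝ)+2) (t⁻¹ • v) ∂ν) +
            C' * ((n:ℝ)+2) ^ (-χ) :=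
          add_le_add (mul_le_mul_of_nonneg_left h1 (Real.rpow_nonneg ht0.le _)) h2
  -- conclude via order topology
  apply tendsto_order.2
  constructor
  · intro a ha
    obtain ⟨n, hn⟩ := (hLf.eventually (eventually_gt_nhds ha)).exists
    filter_upwards [(hcf n).eventually (eventually_gt_nhds hn), eventually_ge_atTop (1:ℝ)]
      with t h1 h2
    exact lt_of_lt_of_le h1 (hlow n t h2)
  · intro b hb
    have htnd : Tendsto (fun n : ℕ => (∫ x, (∫ r in Set.Ioi (0:ℝ),
        bfun u (1-1/((n:ℝ)+2)) 1 ((n:ℝ)+2) (r • x) / r ^ (χ+1)) ∂νinf) +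
          C' * ((n:ℝ)+2) ^ (-χ)) atTop (nhds (I + C' * 0)) := by
      apply hLg.add
      apply Tendsto.const_mul
      exact (tendsto_rpow_neg_atTop hχ).comp
        (tendsto_atTop_add_const_right _ 2 tendsto_natCast_atTop_atTop)
    have hb' : I + C' * 0 < b := by simpa using hb
    obtain ⟨n, hn⟩ := (htnd.eventually (eventually_lt_nhds hb')).exists
    filter_upwards [(hcg n).eventually (eventually_lt_nhds (by linarith :
        (∫ x, (∫ r in Set.Ioi (0:ℝ),
          bfun u (1-1/((n:ℝ)+2)) 1 ((n:ℝ)+2) (r • x) / r ^ (χ+1)) ∂νinf) <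
            b - C' * ((n:ℝ)+2) ^ (-χ))), eventually_ge_atTop (max t₀ 1)] with t h1 h2
    have := hup n t h2
    linarith
end
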